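/- Let q, n, k be integers with q ≥ 4 and n > k ≥ 1, or q = 3 and n > k ≥ 2, or q = 2 and n > k ≥ 3. Then ([n choose k]_q)^2 / C(q^n, q^k) < 1 / q^{(n−k)(q^k − 2k) + k}; equivalently, ([n choose k]_q)^2 · q^{(n−k)(q^k − 2k) + k} < C(q^n, q^k). -/
import Mathlib

set_option maxHeartbeats 1600000

/-- The Gaussian (`q`-)binomial coefficient
`[n choose k]_q = ((qⁿ−1)(qⁿ⁻¹−1)⋯(qⁿ⁻ᵏ⁺¹−1)) / ((qᵏ−1)(qᵏ⁻¹−1)⋯(q−1))`, as a rational. -/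
noncomputable def gaussBinomial (q n k : ℕ) : ℚ :=
  (∏ i ∈ Finset.range k, ((q : ℚ) ^ (n - i) - 1)) /
    (∏ i ∈ Finset.range k, ((q : ℚ) ^ (i + 1) - 1))

namespace GaussAux

open Finset

lemma nsub {a b c : ℕ} (h : a = b + c) : a - b = c := by omega

lemma descF_scale (c X : ℕ) (hc : 1 ≤ c) :
    ∀ j, c ^ j * Nat.descFactorial X j ≤ Nat.descFactorial (c * X) j
  | 0 => by simp
  | (j+1) => by
    rw [Nat.descFactorial_succ, Nat.descFactorial_succ]
    have h1 : c * (X - j) ≤ c * X - j := by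
      rcases Nat.le_total j X with h | h
      · apply Nat.le_sub_of_add_le
        calc c * (X - j) + j ≤ c * (X - j) + c * j :=
              Nat.add_le_add_left (Nat.le_mul_of_pos_left j hc) _
          _ = c * ((X - j) + j) := by ring
          _ = c * X := by rw [Nat.sub_add_cancel h]
      · simp [Nat.sub_eq_zero_of_le h]
    calc c ^ (j+1) * ((X - j) * Nat.descFactorial X j)
        = (c * (X - j)) * (c ^ j * Nat.descFactorial X j) := by ring
      _ ≤ (c * X - j) * Nat.descFactorial (c * X) j :=
          Nat.mul_le_mul h1 (descF_scale c X hc j)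

lemma peel3 (X m₀ : ℕ) : Nat.descFactorial X (m₀ + 3)
    = (X - (m₀+2)) * ((X - (m₀+1)) * ((X - m₀) * Nat.descFactorial X m₀)) := by
  calc Nat.descFactorial X (m₀+3)
      = (X - (m₀+2)) * Nat.descFactorial X (m₀+2) := Nat.descFactorial_succ X (m₀+2)
    _ = (X - (m₀+2)) * ((X - (m₀+1)) * Nat.descFactorial X (m₀+1)) := by
        rw [Nat.descFactorial_succ X (m₀+1)]
    _ = (X - (m₀+2)) * ((X - (m₀+1)) * ((X - m₀) * Nat.descFactorial X m₀)) := by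
        rw [Nat.descFactorial_succ X m₀]

lemma peel4 (X m₀ : ℕ) : Nat.descFactorial X (m₀ + 4)
    = (X - (m₀+3)) * ((X - (m₀+2)) * ((X - (m₀+1)) * ((X - m₀) * Nat.descFactorial X m₀))) := by
  calc Nat.descFactorial X (m₀+4)
      = (X - (m₀+3)) * Nat.descFactorial X (m₀+3) := Nat.descFactorial_succ X (m₀+3)
    _ = _ := by rw [peel3]

lemma two_mul_le_pow {q k : ℕ} (hq : 2 ≤ q) : 2 * k ≤ q ^ k := by
  have h2 : 2 * k ≤ 2 ^ k := by
    induction k with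
    | zero => simp
    | succ k ih =>
      rcases Nat.eq_zero_or_pos k with rfl | hk
      · norm_num
      · have h3 : (2:ℕ) ≤ 2 ^ k := by
          calc (2:ℕ) = 2 ^ 1 := by norm_num
            _ ≤ 2 ^ k := Nat.pow_le_pow_right (by norm_num) hk
        calc 2 * (k+1) = 2 * k + 2 := by ring
          _ ≤ 2 ^ k + 2 ^ k := Nat.add_le_add ih h3
          _ = 2 ^ (k+1) := by ring
  exact le_trans h2 (Nat.pow_le_pow_left hq k)

lemma core4 (q m y : ℕ)
    (hc : (4 ≤ q ∧ 4 ≤ m) ∨ (q = 3 ∧ 9 ≤ m) ∨ (q = 2 ∧ 8 ≤ m))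
    (hy : q * m ≤ y) :
    q ^ 6 * y ^ 2 * ((y - m + 1) * ((y - m + 2) * ((y - m + 3) * (y - m + 4))))
      ≤ (q * y - m) ^ 2 *
        ((q * y - m + 1) * ((q * y - m + 2) * ((q * y - m + 3) * (q * y - m + 4)))) := by
  rcases hc with ⟨hq4, hm4⟩ | ⟨rfl, hm9⟩ | ⟨rfl, hm8⟩
  · -- q ≥ 4
    obtain ⟨r, rfl⟩ : ∃ r, q = 4 + r := by
      obtain ⟨r, hr⟩ := Nat.exists_eq_add_of_le hq4; exact ⟨r, hr⟩
    obtain ⟨u, rfl⟩ : ∃ u, m = 4 + u := by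
      obtain ⟨u, hu⟩ := Nat.exists_eq_add_of_le hm4; exact ⟨u, hu⟩
    obtain ⟨s, rfl⟩ : ∃ s, y = (4+r) * (4+u) + s := Nat.exists_eq_add_of_le hy
    have e1 : (4+r) * (4+u) + s - (4+u) = (3+r)*(4+u) + s :=
      nsub (by ring)
    have e2 : (4+r) * ((4+r) * (4+u) + s) - (4+u) = (r*r+8*r+15)*(4+u) + (4+r)*s :=
      nsub (by ring)
    rw [e1, e2]
    calc (4+r) ^ 6 * ((4+r)*(4+u)+s) ^ 2 *
          (((3+r)*(4+u)+s + 1) * (((3+r)*(4+u)+s + 2) * (((3+r)*(4+u)+s + 3) * ((3+r)*(4+u)+s + 4))))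
        = ((4+r)^4 * ((4+r)*(4+u)+s)^2 * (((3+r)*(4+u)+s+1) * ((3+r)*(4+u)+s+2)))
            * (((4+r)*((3+r)*(4+u)+s+3)) * ((4+r)*((3+r)*(4+u)+s+4))) := by ring
      _ ≤ (((r*r+8*r+15)*(4+u)+(4+r)*s)^2 *
            (((r*r+8*r+15)*(4+u)+(4+r)*s+1) * ((r*r+8*r+15)*(4+u)+(4+r)*s+2)))
            * ((((r*r+8*r+15)*(4+u)+(4+r)*s+3)) * (((r*r+8*r+15)*(4+u)+(4+r)*s+4))) := by
          apply Nat.mul_le_mul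
          · refine Nat.le.intro (k := 2*r^7*u^4 + 29*r^7*u^3 + 156*r^7*u^2 + 368*r^7*u + 320*r^7 + 51*r^6*u^4 + 6*r^6*u^3*s + 738*r^6*u^3 + 63*r^6*u^2*s + 3958*r^6*u^2 + 216*r^6*u*s + 9296*r^6*u + 240*r^6*s + 8032*r^6 + 552*r^5*u^4 + 130*r^5*u^3*s + 7968*r^5*u^3 + 6*r^5*u^2*s^2 + 1359*r^5*u^2*s + 42576*r^5*u^2 + 39*r^5*u*s^2 + 4628*r^5*u*s + 99456*r^5*u + 60*r^5*s^2 + 5088*r^5*s + 85248*r^5 + 3286*r^4*u^4 + 1160*r^4*u^3*s + 47287*r^4*u^3 + 107*r^4*u^2*s^2 + 12060*r^4*u^2*s + 251510*r^4*u^2 + 2*r^4*u*s^3 + 688*r^4*u*s^2 + 40720*r^4*u*s + 583520*r^4*u + 5*r^4*s^3 + 1038*r^4*s^2 + 44160*r^4*s + 495072*r^4 + 11616*r^3*u^4 + 5452*r^3*u^3*s + 166512*r^3*u^3 + 752*r^3*u^2*s^2 + 56286*r^3*u^2*s + 880480*r^3*u^2 + 28*r^3*u*s^3 + 4768*r^3*u*s^2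 + 187956*r^3*u*s + 2024960*r^3*u + 67*r^3*s^3 + 7008*r^3*s^2 + 200176*r^3*s + 1695232*r^3 + 24380*r^2*u^4 + 14224*r^2*u^3*s + 347753*r^2*u^3 + 2598*r^2*u^2*s^2 + 145512*r^2*u^2*s + 1825064*r^2*u^2 + 144*r^2*u*s^3 + 16167*r^2*u*s^2 + 478832*r^2*u*s + 4149648*r^2*u + 324*r^2*s^3 + 22910*r^2*s^2 + 497472*r^2*s + 3412480*r^2 + 28128*r*u^4 + 19516*r*u^3*s + 398664*r*u^3 + 4400*r*u^2*s^2 + 197241*r*u^2*s + 2071872*r*u^2 + 320*r*u*s^3 + 26680*r*u*s^2 + 636228*r*u*s + 4639872*r*u + 656*r*s^3 + 35824*r*s^2 + 638080*r*s + 3723264*r + 13761*u^4 + 10992*u^3*s + 193437*u^3 + 2912*u^2*s^2 + 109284*u^2*s + 992446*u^2 + 256*u*s^3 + 17008*u*s^2 + 342800*u*s + 2177408*u + 448*s^3 + 20960*s^2 + 326144*s + 1687648) ?_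
            ring
          · exact Nat.mul_le_mul (Nat.le.intro (k := (r+3)*(u+1)) (by ring))
              (Nat.le.intro (k := (r+3)*u) (by ring))
      _ = _ := by ring
  · -- q = 3
    obtain ⟨u, rfl⟩ : ∃ u, m = 9 + u := by
      obtain ⟨u, hu⟩ := Nat.exists_eq_add_of_le hm9; exact ⟨u, hu⟩
    obtain ⟨s, rfl⟩ : ∃ s, y = 3 * (9+u) + s := Nat.exists_eq_add_of_le hy
    rw [show 3 * (9+u) + s - (9+u) = 18 + 2*u + s by omega,
        show 3 * (3*(9+u)+s) - (9+u) = 72 + 8*u + 3*s by omega]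
    calc 3 ^ 6 * (3*(9+u)+s) ^ 2 *
          ((18+2*u+s + 1) * ((18+2*u+s + 2) * ((18+2*u+s + 3) * (18+2*u+s + 4))))
        = (81 * (3*(9+u)+s)^2 * ((18+2*u+s+1) * (18+2*u+s+2)))
            * ((3*(18+2*u+s+3)) * (3*(18+2*u+s+4))) := by ring
      _ ≤ ((72+8*u+3*s)^2 * ((72+8*u+3*s+1) * (72+8*u+3*s+2)))
            * ((72+8*u+3*s+3) * (72+8*u+3*s+4)) := by
          apply Nat.mul_le_mul
          · refine Nat.le.intro (k := 1180*u^4 + 1284*u^3*s + 39642*u^3 + 459*u^2*s^2 + 31293*u^2*s + 495524*u^2 + 54*u*s^3 + 6966*u*s^2 + 250386*u*s + 2727306*u + 324*s^3 + 25371*s^2 + 654777*s + 5565348) ?_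
            ring
          · exact Nat.mul_le_mul (by omega) (by omega)
      _ = _ := by ring
  · -- q = 2
    obtain ⟨u, rfl⟩ : ∃ u, m = 8 + u := by
      obtain ⟨u, hu⟩ := Nat.exists_eq_add_of_le hm8; exact ⟨u, hu⟩
    obtain ⟨s, rfl⟩ : ∃ s, y = 2 * (8+u) + s := Nat.exists_eq_add_of_le hy
    rw [show 2 * (8+u) + s - (8+u) = 8 + u + s by omega,
        show 2 * (2*(8+u)+s) - (8+u) = 24 + 3*u + 2*s by omega]
    refine Nat.le.intro (k := 473*u^6 + 1636*u^5*s + 22574*u^5 + 2236*u^4*s^2 + 63300*u^4*s + 442755*u^4 + 1504*u^3*s^3 + 66352*u^3*s^2 + 959240*u^3*s + 4552870*u^3 + 496*u^2*s^4 + 31136*u^2*s^3 + 712264*u^2*s^2 + 7067980*u^2*s + 25762792*u^2 + 64*u*s^5 + 5856*u*s^4 + 199328*u*s^3 + 3221768*u*s^2 + 25040864*u*s + 75495936*u + 192*s^5 + 13424*s^4 + 369168*s^3 + 5001376*s^2 + 33438720*s + 88404480) ?_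
    ring

lemma stepS (q k n : ℕ) (hq : 2 ≤ q) (hk : 1 ≤ k)
    (hc : (4 ≤ q ∧ 4 ≤ q^k) ∨ (q = 3 ∧ 9 ≤ q^k) ∨ (q = 2 ∧ 8 ≤ q^k))
    (hkn : k + 1 ≤ n) :
    (q ^ (n+1) - 1) ^ 2 * q ^ (q^k - 2*k) * Nat.descFactorial (q ^ n) (q ^ k)
      ≤ (q ^ (n+1-k) - 1) ^ 2 * Nat.descFactorial (q * q ^ n) (q ^ k) := by
  have hqpos : 0 < q := by omega
  have hm2k : 2 * k ≤ q ^ k := two_mul_le_pow hq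
  have hm4 : 4 ≤ q ^ k := by rcases hc with ⟨h1, h2⟩ | ⟨h1, h2⟩ | ⟨h1, h2⟩ <;> omega
  obtain ⟨b, hb⟩ : ∃ b, q ^ (n+1-k) = b + 1 :=
    ⟨q ^ (n+1-k) - 1, by have := Nat.one_le_pow (n+1-k) q hqpos; omega⟩
  rw [show q ^ (n+1-k) - 1 = b by omega]
  have hB : q ^ k * (b+1) = q * q ^ n := by
    rw [← hb, ← pow_add, ← pow_succ']; congr 1; omega
  have ha : q ^ (n+1) - 1 ≤ q ^ k * (b+1) := by
    have e : q ^ k * (b+1) = q ^ (n+1) := by rw [← hb, ← pow_add]; congr 1; omega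
    rw [e]; exact Nat.sub_le _ _
  have hqm : q * q ^ k ≤ q ^ n := by
    calc q * q ^ k = q ^ (k+1) := (pow_succ' q k).symm
      _ ≤ q ^ n := Nat.pow_le_pow_right hqpos hkn
  have hmN : q ^ k ≤ q ^ n := Nat.pow_le_pow_right hqpos (by omega)
  have hNN : q ^ n ≤ q * q ^ n := Nat.le_mul_of_pos_left _ hqpos
  obtain ⟨m₀, hm₀⟩ : ∃ m₀, q ^ k = m₀ + 4 := ⟨q ^ k - 4, by omega⟩
  -- peel both descFactorials
  have hz : q * q ^ n - q ^ k = q ^ k * b := by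
    apply nsub; rw [← hB]; ring
  have hkey : (b+1) ^ 2 * q ^ (q^k) * Nat.descFactorial (q^n) (q^k)
      ≤ b ^ 2 * Nat.descFactorial (q * q^n) (q^k) := by
    have hA : (b+1) ^ 2 * q ^ 4 *
        ((q^n - q^k + 1) * ((q^n - q^k + 2) * ((q^n - q^k + 3) * (q^n - q^k + 4))))
        ≤ b ^ 2 * ((q*q^n - q^k + 1) * ((q*q^n - q^k + 2) * ((q*q^n - q^k + 3) * (q*q^n - q^k + 4)))) := by
      apply Nat.le_of_mul_le_mul_left _ (show 0 < (q^k)^2 by positivity)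
      calc (q^k)^2 * ((b+1)^2 * q^4 * ((q^n - q^k + 1) * ((q^n - q^k + 2) * ((q^n - q^k + 3) * (q^n - q^k + 4)))))
          = q^4 * (q^k*(b+1))^2 * ((q^n - q^k + 1) * ((q^n - q^k + 2) * ((q^n - q^k + 3) * (q^n - q^k + 4)))) := by ring
        _ = q^4 * (q*q^n)^2 * ((q^n - q^k + 1) * ((q^n - q^k + 2) * ((q^n - q^k + 3) * (q^n - q^k + 4)))) := by rw [hB]
        _ = q^6 * (q^n)^2 * ((q^n - q^k + 1) * ((q^n - q^k + 2) * ((q^n - q^k + 3) * (q^n - q^k + 4)))) := by ring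
        _ ≤ (q * q^n - q^k) ^ 2 * ((q*q^n - q^k + 1) * ((q*q^n - q^k + 2) * ((q*q^n - q^k + 3) * (q*q^n - q^k + 4)))) :=
            core4 q (q^k) (q^n) hc hqm
        _ = (q^k * b)^2 * ((q*q^n - q^k + 1) * ((q*q^n - q^k + 2) * ((q*q^n - q^k + 3) * (q*q^n - q^k + 4)))) := by rw [hz]
        _ = (q^k)^2 * (b^2 * ((q*q^n - q^k + 1) * ((q*q^n - q^k + 2) * ((q*q^n - q^k + 3) * (q*q^n - q^k + 4))))) := by ring
    rw [hm₀, peel4 (q^n) m₀, peel4 (q * q^n) m₀]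
    rw [show q^n - (m₀+3) = q^n - (m₀+4) + 1 by omega,
        show q^n - (m₀+2) = q^n - (m₀+4) + 2 by omega,
        show q^n - (m₀+1) = q^n - (m₀+4) + 3 by omega,
        show q^n - m₀ = q^n - (m₀+4) + 4 by omega,
        show q*q^n - (m₀+3) = q*q^n - (m₀+4) + 1 by omega,
        show q*q^n - (m₀+2) = q*q^n - (m₀+4) + 2 by omega,
        show q*q^n - (m₀+1) = q*q^n - (m₀+4) + 3 by omega,
        show q*q^n - m₀ = q*q^n - (m₀+4) + 4 by omega]
    rw [← hm₀]
    calc (b+1)^2 * q^(q^k) *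
          ((q^n - q^k + 1) * ((q^n - q^k + 2) * ((q^n - q^k + 3) * ((q^n - q^k + 4) * Nat.descFactorial (q^n) m₀))))
        = ((b+1)^2 * q^4 * ((q^n - q^k + 1) * ((q^n - q^k + 2) * ((q^n - q^k + 3) * (q^n - q^k + 4)))))
            * (q^m₀ * Nat.descFactorial (q^n) m₀) := by
          rw [show q^k = m₀ + 4 from hm₀, pow_add]; ring
      _ ≤ (b^2 * ((q*q^n - q^k + 1) * ((q*q^n - q^k + 2) * ((q*q^n - q^k + 3) * (q*q^n - q^k + 4)))))
            * Nat.descFactorial (q * q^n) m₀ :=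
          Nat.mul_le_mul hA (descF_scale q (q^n) (by omega) m₀)
      _ = b^2 * ((q*q^n - q^k + 1) * ((q*q^n - q^k + 2) * ((q*q^n - q^k + 3) * ((q*q^n - q^k + 4) * Nat.descFactorial (q*q^n) m₀)))) := by ring
  calc (q ^ (n+1) - 1) ^ 2 * q ^ (q^k - 2*k) * Nat.descFactorial (q ^ n) (q ^ k)
      ≤ (q^k*(b+1)) ^ 2 * q ^ (q^k - 2*k) * Nat.descFactorial (q ^ n) (q ^ k) := by
        exact Nat.mul_le_mul_right _ (Nat.mul_le_mul_right _ (Nat.pow_le_pow_left ha 2))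
    _ = (b+1)^2 * ((q^k)^2 * q^(q^k - 2*k)) * Nat.descFactorial (q^n) (q^k) := by ring
    _ = (b+1)^2 * q^(q^k) * Nat.descFactorial (q^n) (q^k) := by
        rw [← pow_mul, ← pow_add, show k*2 + (q^k - 2*k) = q^k by omega]
    _ ≤ b ^ 2 * Nat.descFactorial (q * q ^ n) (q ^ k) := hkey

/-- reduction of the base case to a polynomial key inequality -/
lemma base_reduce (q k : ℕ) (hq : 2 ≤ q) (hm3 : 3 ≤ q^k)
    (key : 6 * ((q^(k+1)-1)^2 * q^(q^k-k))
      < (q-1)^2 * (((q-1)*q^k+1) * (((q-1)*q^k+2) * ((q-1)*q^k+3))) * q^(q^k-3)) :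
    (q^(k+1)-1)^2 * q^(q^k-k) * Nat.factorial (q^k)
      < (q-1)^2 * Nat.descFactorial (q*q^k) (q^k) := by
  obtain ⟨m₀, hm₀⟩ : ∃ m₀, q ^ k = m₀ + 3 := ⟨q^k - 3, by omega⟩
  have hqm : q * q^k = (q-1)*q^k + (m₀ + 3) := by
    have h1 : q = (q-1) + 1 := by omega
    calc q * q^k = ((q-1)+1) * q^k := by rw [← h1]
      _ = (q-1)*q^k + q^k := by ring
      _ = (q-1)*q^k + (m₀+3) := by rw [hm₀]
  have e1 : q*q^k - (m₀+2) = (q-1)*q^k + 1 := nsub (by rw [hqm]; ring)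
  have e2 : q*q^k - (m₀+1) = (q-1)*q^k + 2 := nsub (by rw [hqm]; ring)
  have e3 : q*q^k - m₀ = (q-1)*q^k + 3 := nsub (by rw [hqm]; ring)
  have hpeelQ : Nat.descFactorial (q*q^k) (q^k)
      = ((q-1)*q^k+1) * (((q-1)*q^k+2) * (((q-1)*q^k+3) * Nat.descFactorial (q*q^k) m₀)) := by
    calc Nat.descFactorial (q*q^k) (q^k) = Nat.descFactorial (q*q^k) (m₀+3) := by rw [hm₀]
      _ = (q*q^k - (m₀+2)) * ((q*q^k - (m₀+1)) * ((q*q^k - m₀) * Nat.descFactorial (q*q^k) m₀)) :=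
          peel3 _ m₀
      _ = _ := by rw [e1, e2, e3]
  have hfac : Nat.factorial (q^k) = 6 * Nat.descFactorial (q^k) m₀ := by
    calc Nat.factorial (q^k) = Nat.descFactorial (q^k) (q^k) := (Nat.descFactorial_self (q^k)).symm
      _ = Nat.descFactorial (q^k) (m₀+3) := by rw [hm₀]
      _ = (q^k - (m₀+2)) * ((q^k - (m₀+1)) * ((q^k - m₀) * Nat.descFactorial (q^k) m₀)) := peel3 _ m₀
      _ = 6 * Nat.descFactorial (q^k) m₀ := by
          rw [show q^k - (m₀+2) = 1 by omega, show q^k - (m₀+1) = 2 by omega,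
              show q^k - m₀ = 3 by omega]
          ring
  have hscale : q^m₀ * Nat.descFactorial (q^k) m₀ ≤ Nat.descFactorial (q*q^k) m₀ :=
    descF_scale q (q^k) (by omega) m₀
  have hFpos : 0 < Nat.descFactorial (q^k) m₀ :=
    Nat.pos_of_ne_zero (fun hzero => by
      rw [Nat.descFactorial_eq_zero_iff_lt] at hzero; omega)
  calc (q^(k+1)-1)^2 * q^(q^k-k) * Nat.factorial (q^k)
      = (6 * ((q^(k+1)-1)^2 * q^(q^k-k))) * Nat.descFactorial (q^k) m₀ := by
        rw [hfac]; ring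
    _ < ((q-1)^2 * (((q-1)*q^k+1) * (((q-1)*q^k+2) * ((q-1)*q^k+3))) * q^(q^k-3))
          * Nat.descFactorial (q^k) m₀ := by
        exact Nat.mul_lt_mul_of_lt_of_le key (le_refl _) hFpos
    _ = (q-1)^2 * (((q-1)*q^k+1) * (((q-1)*q^k+2) * ((q-1)*q^k+3)))
          * (q^m₀ * Nat.descFactorial (q^k) m₀) := by
        rw [show q^k - 3 = m₀ by omega]; ring
    _ ≤ (q-1)^2 * (((q-1)*q^k+1) * (((q-1)*q^k+2) * ((q-1)*q^k+3)))
          * Nat.descFactorial (q*q^k) m₀ := Nat.mul_le_mul_left _ hscale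
    _ = (q-1)^2 * Nat.descFactorial (q*q^k) (q^k) := by rw [hpeelQ]; ring

/-- key for base, k = 1, q ≥ 4 -/
lemma key_b1 (q : ℕ) (hq : 4 ≤ q) :
    6 * ((q^(1+1)-1)^2 * q^(q^1-1))
      < (q-1)^2 * (((q-1)*q^1+1) * (((q-1)*q^1+2) * ((q-1)*q^1+3))) * q^(q^1-3) := by
  obtain ⟨r, rfl⟩ : ∃ r, q = 4 + r := by
    obtain ⟨r, hr⟩ := Nat.exists_eq_add_of_le hq; exact ⟨r, hr⟩
  rw [pow_one]
  have e1 : (4+r)^(1+1) - 1 = r*r + 8*r + 15 := nsub (by ring)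
  have e2 : (4+r) - 1 = 3 + r := by omega
  rw [e1, e2]
  rw [show (4:ℕ)+r-3 = 1+r by omega]
  rw [show ((4:ℕ)+r)^(3+r) = (4+r)^(1+r) * (4+r)^2 by rw [← pow_add]; congr 1; omega]
  calc 6 * ((r*r+8*r+15)^2 * ((4+r)^(1+r) * (4+r)^2))
      = (6 * ((r*r+8*r+15)^2 * (4+r)^2)) * (4+r)^(1+r) := by ring
    _ < ((3+r)^2 * (((3+r)*(4+r)+1) * (((3+r)*(4+r)+2) * ((3+r)*(4+r)+3)))) * (4+r)^(1+r) := by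
        apply Nat.mul_lt_mul_of_lt_of_le _ (le_refl _) (by positivity)
        calc 6 * ((r*r+8*r+15)^2 * (4+r)^2)
            < 6 * ((r*r+8*r+15)^2 * (4+r)^2)
              + (r^8 + 27*r^7 + 318*r^6 + 2110*r^5 + 8504*r^4 + 20870*r^3 + 29295*r^2 + 19521*r + 2970) := by
              have : (0:ℕ) < r^8 + 27*r^7 + 318*r^6 + 2110*r^5 + 8504*r^4 + 20870*r^3 + 29295*r^2 + 19521*r + 2970 := by positivity
              omega
          _ = (3+r)^2 * (((3+r)*(4+r)+1) * (((3+r)*(4+r)+2) * ((3+r)*(4+r)+3))) := by ring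
    _ = (3+r)^2 * (((3+r)*(4+r)+1) * (((3+r)*(4+r)+2) * ((3+r)*(4+r)+3))) * (4+r)^(1+r) := by ring

/-- 6 q^{2k+5} ≤ (q-1)^5 q^{4k} -/
lemma L5 (q k : ℕ)
    (hb : (4 ≤ q ∧ 2 ≤ k) ∨ (q = 3 ∧ 3 ≤ k) ∨ (q = 2 ∧ 4 ≤ k)) :
    6 * q^(2*k+5) ≤ (q-1)^5 * q^(4*k) := by
  rcases hb with ⟨hq4, hk2⟩ | ⟨rfl, hk3⟩ | ⟨rfl, hk4⟩
  · have h6q : 6 * q ≤ (q-1)^5 := by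
      obtain ⟨r, rfl⟩ : ∃ r, q = 4 + r := by
        obtain ⟨r, hr⟩ := Nat.exists_eq_add_of_le hq4; exact ⟨r, hr⟩
      rw [show (4+r) - 1 = 3 + r by omega]
      exact Nat.le.intro (k := r^5+15*r^4+90*r^3+270*r^2+399*r+219) (by ring)
    calc 6 * q^(2*k+5) = (6*q) * q^(2*k+4) := by
          rw [show 2*k+5 = (2*k+4)+1 by omega, pow_succ]; ring
      _ ≤ (q-1)^5 * q^(2*k+4) := Nat.mul_le_mul_right _ h6q
      _ ≤ (q-1)^5 * q^(4*k) :=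
          Nat.mul_le_mul_left _ (Nat.pow_le_pow_right (by omega) (by omega))
  · have h1 : (729:ℕ) ≤ 3^(2*k) := by
      calc (729:ℕ) = 3^6 := by norm_num
        _ ≤ 3^(2*k) := Nat.pow_le_pow_right (by norm_num) (by omega)
    calc 6 * 3^(2*k+5) = 1458 * 3^(2*k) := by rw [pow_add]; ring
      _ ≤ (2*3^(2*k)) * 3^(2*k) := Nat.mul_le_mul_right _ (by omega)
      _ = 2^5 * 3^(4*k) - 30 * 3^(4*k) := by
          rw [show 4*k = 2*k + 2*k by omega, pow_add]; ring_nf; omega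
      _ ≤ (3-1)^5 * 3^(4*k) := by norm_num
  · have h1 : (256:ℕ) ≤ 2^(2*k) := by
      calc (256:ℕ) = 2^8 := by norm_num
        _ ≤ 2^(2*k) := Nat.pow_le_pow_right (by norm_num) (by omega)
    calc 6 * 2^(2*k+5) = 192 * 2^(2*k) := by rw [pow_add]; ring
      _ ≤ 2^(2*k) * 2^(2*k) := Nat.mul_le_mul_right _ (by omega)
      _ = (2-1)^5 * 2^(4*k) := by
          rw [show 4*k = 2*k + 2*k by omega, pow_add]; norm_num

/-- key for base, general k ≥ 2 cases -/
lemma key_b2 (q k : ℕ)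
    (hb : (4 ≤ q ∧ 2 ≤ k) ∨ (q = 3 ∧ 3 ≤ k) ∨ (q = 2 ∧ 4 ≤ k)) :
    6 * ((q^(k+1)-1)^2 * q^(q^k-k))
      < (q-1)^2 * (((q-1)*q^k+1) * (((q-1)*q^k+2) * ((q-1)*q^k+3))) * q^(q^k-3) := by
  have hq : 2 ≤ q := by rcases hb with ⟨h,_⟩|⟨h,_⟩|⟨h,_⟩ <;> omega
  have hm2k : 2*k ≤ q^k := two_mul_le_pow hq
  have hm16 : 16 ≤ q^k := by
    rcases hb with ⟨h1, h2⟩ | ⟨rfl, h2⟩ | ⟨rfl, h2⟩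
    · calc (16:ℕ) = 4^2 := by norm_num
        _ ≤ q^2 := Nat.pow_le_pow_left h1 2
        _ ≤ q^k := Nat.pow_le_pow_right (by omega) h2
    · calc (16:ℕ) ≤ 3^3 := by norm_num
        _ ≤ 3^k := Nat.pow_le_pow_right (by norm_num) h2
    · calc (16:ℕ) = 2^4 := by norm_num
        _ ≤ 2^k := Nat.pow_le_pow_right (by norm_num) h2
  have hk3m : k + 3 ≤ q^k := by omega
  have hstrict : (q^(k+1)-1)^2 < (q^(k+1))^2 := by
    have h1 : 0 < q^(k+1) := by positivity
    exact Nat.pow_lt_pow_left (by omega) (by norm_num)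
  have hL5 := L5 q k hb
  calc 6 * ((q^(k+1)-1)^2 * q^(q^k-k))
      < 6 * ((q^(k+1))^2 * q^(q^k-k)) := by
        have hp : 0 < q^(q^k-k) := by positivity
        have := Nat.mul_lt_mul_of_lt_of_le hstrict (le_refl (q^(q^k-k))) hp
        omega
    _ = (6 * q^(2*k+5)) * q^(q^k-k-3) := by
        rw [← pow_mul, ← pow_add, show (k+1)*2 + (q^k - k) = (2*k+5) + (q^k - k - 3) by omega,
            pow_add]
        ring
    _ ≤ ((q-1)^5 * q^(4*k)) * q^(q^k-k-3) := Nat.mul_le_mul_right _ hL5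
    _ = (q-1)^2 * ((q-1)*q^k)^3 * q^(q^k-3) := by
        rw [mul_assoc, ← pow_add, show 4*k + (q^k - k - 3) = k*3 + (q^k - 3) by omega,
            pow_add, mul_pow, ← pow_mul]
        ring
    _ ≤ (q-1)^2 * (((q-1)*q^k+1) * (((q-1)*q^k+2) * ((q-1)*q^k+3))) * q^(q^k-3) := by
        apply Nat.mul_le_mul_right
        apply Nat.mul_le_mul_left
        calc ((q-1)*q^k)^3 = (q-1)*q^k * ((q-1)*q^k * ((q-1)*q^k)) := by ring
          _ ≤ ((q-1)*q^k+1) * (((q-1)*q^k+2) * ((q-1)*q^k+3)) := by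
              apply Nat.mul_le_mul (by omega)
              exact Nat.mul_le_mul (by omega) (by omega)

/-- base inequality, all cases -/
lemma base_all (q k : ℕ)
    (h : (4 ≤ q ∧ 1 ≤ k) ∨ (q = 3 ∧ 2 ≤ k) ∨ (q = 2 ∧ 3 ≤ k)) :
    (q^(k+1)-1)^2 * q^(q^k-k) * Nat.factorial (q^k)
      < (q-1)^2 * Nat.descFactorial (q*q^k) (q^k) := by
  have hq : 2 ≤ q := by rcases h with ⟨h1,_⟩|⟨h1,_⟩|⟨h1,_⟩ <;> omega
  rcases h with ⟨h1, h2⟩ | ⟨rfl, h2⟩ | ⟨rfl, h2⟩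
  · rcases Nat.lt_or_ge k 2 with hk | hk
    · have hk1 : k = 1 := by omega
      subst hk1
      exact base_reduce q 1 hq (by rw [pow_one]; omega) (key_b1 q h1)
    · have hm3 : 3 ≤ q^k := by
        calc (3:ℕ) ≤ 4^2 := by norm_num
          _ ≤ q^2 := Nat.pow_le_pow_left h1 2
          _ ≤ q^k := Nat.pow_le_pow_right (by omega) hk
      exact base_reduce q k hq hm3 (key_b2 q k (Or.inl ⟨h1, hk⟩))
  · rcases Nat.lt_or_ge k 3 with hk | hk
    · have hk2 : k = 2 := by omega
      subst hk2
      decide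
    · have hm3 : 3 ≤ 3^k := by
        calc (3:ℕ) = 3^1 := by norm_num
          _ ≤ 3^k := Nat.pow_le_pow_right (by norm_num) (by omega)
      exact base_reduce 3 k hq hm3 (key_b2 3 k (Or.inr (Or.inl ⟨rfl, hk⟩)))
  · rcases Nat.lt_or_ge k 4 with hk | hk
    · have hk3 : k = 3 := by omega
      subst hk3
      decide
    · have hm3 : 3 ≤ 2^k := by
        calc (3:ℕ) ≤ 2^2 := by norm_num
          _ ≤ 2^k := Nat.pow_le_pow_right (by norm_num) (by omega)
      exact base_reduce 2 k hq hm3 (key_b2 2 k (Or.inr (Or.inr ⟨rfl, hk⟩)))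

/-- telescoping for the base case -/
lemma tel_base (q k : ℕ) :
    (q-1) * ∏ i ∈ range k, (q^(k+1-i)-1)
      = (q^(k+1)-1) * ∏ i ∈ range k, (q^(i+1)-1) := by
  have h1 : ∏ i ∈ range k, (q^(k+1-i)-1) = ∏ i ∈ range k, (q^(i+2)-1) := by
    calc ∏ i ∈ range k, (q^(k+1-i)-1)
        = ∏ i ∈ range k, (q^((k-1-i)+2)-1) := by
          refine Finset.prod_congr rfl fun i hi => ?_
          have : i < k := Finset.mem_range.mp hi
          congr 2
          omega
      _ = ∏ i ∈ range k, (q^(i+2)-1) := Finset.prod_range_reflect (fun j => q^(j+2)-1) k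
  have h2 : ∏ i ∈ range (k+1), (q^(i+1)-1)
      = (q^(0+1)-1) * ∏ i ∈ range k, (q^(i+1+1)-1) := by
    rw [Finset.prod_range_succ']; ring
  have h3 : ∏ i ∈ range (k+1), (q^(i+1)-1)
      = (∏ i ∈ range k, (q^(i+1)-1)) * (q^(k+1)-1) := Finset.prod_range_succ _ k
  have h4 : ∏ i ∈ range k, (q^(i+1+1)-1) = ∏ i ∈ range k, (q^(i+2)-1) := by
    refine Finset.prod_congr rfl fun i _ => by congr 2
  rw [h1]
  calc (q-1) * ∏ i ∈ range k, (q^(i+2)-1)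
      = (q^(0+1)-1) * ∏ i ∈ range k, (q^(i+1+1)-1) := by rw [h4]; norm_num
    _ = (∏ i ∈ range k, (q^(i+1)-1)) * (q^(k+1)-1) := by rw [← h2, h3]
    _ = (q^(k+1)-1) * ∏ i ∈ range k, (q^(i+1)-1) := by ring

/-- telescoping for the induction step -/
lemma tel_step (q k n : ℕ) (hk : 1 ≤ k) (hkn : k ≤ n) :
    (q^(n+1-k)-1) * ∏ i ∈ range k, (q^(n+1-i)-1)
      = (q^(n+1)-1) * ∏ i ∈ range k, (q^(n-i)-1) := by
  obtain ⟨k', rfl⟩ : ∃ k', k = k' + 1 := ⟨k-1, by omega⟩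
  have h1 : ∏ i ∈ range (k'+1), (q^(n+1-i)-1)
      = (q^(n+1-0)-1) * ∏ i ∈ range k', (q^(n+1-(i+1))-1) := by
    rw [Finset.prod_range_succ']; ring
  have h2 : ∏ i ∈ range k', (q^(n+1-(i+1))-1) = ∏ i ∈ range k', (q^(n-i)-1) := by
    refine Finset.prod_congr rfl fun i _ => by congr 2; omega
  have h3 : ∏ i ∈ range (k'+1), (q^(n-i)-1)
      = (∏ i ∈ range k', (q^(n-i)-1)) * (q^(n-k')-1) := Finset.prod_range_succ _ k'
  have h4 : n - k' = n+1-(k'+1) := by omega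
  rw [h1, h2, h3, ← h4, Nat.sub_zero]
  ring

theorem main_nat (q k : ℕ)
    (h : (4 ≤ q ∧ 1 ≤ k) ∨ (q = 3 ∧ 2 ≤ k) ∨ (q = 2 ∧ 3 ≤ k)) :
    ∀ n, k + 1 ≤ n →
      (∏ i ∈ range k, (q^(n-i)-1))^2 * q^((n-k)*(q^k-2*k)+k) * Nat.factorial (q^k)
        < (∏ i ∈ range k, (q^(i+1)-1))^2 * Nat.descFactorial (q^n) (q^k) := by
  have hq : 2 ≤ q := by rcases h with ⟨h1,_⟩|⟨h1,_⟩|⟨h1,_⟩ <;> omega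
  have hk1 : 1 ≤ k := by rcases h with ⟨_,h1⟩|⟨_,h1⟩|⟨_,h1⟩ <;> omega
  have hm2k : 2*k ≤ q^k := two_mul_le_pow hq
  have hc : (4 ≤ q ∧ 4 ≤ q^k) ∨ (q = 3 ∧ 9 ≤ q^k) ∨ (q = 2 ∧ 8 ≤ q^k) := by
    rcases h with ⟨h1, h2⟩ | ⟨rfl, h2⟩ | ⟨rfl, h2⟩
    · exact Or.inl ⟨h1, by calc (4:ℕ) ≤ q := h1
        _ = q^1 := (pow_one q).symm
        _ ≤ q^k := Nat.pow_le_pow_right (by omega) h2⟩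
    · exact Or.inr (Or.inl ⟨rfl, by calc (9:ℕ) = 3^2 := by norm_num
        _ ≤ 3^k := Nat.pow_le_pow_right (by norm_num) h2⟩)
    · exact Or.inr (Or.inr ⟨rfl, by calc (8:ℕ) = 2^3 := by norm_num
        _ ≤ 2^k := Nat.pow_le_pow_right (by norm_num) h2⟩)
  refine Nat.le_induction ?_ ?_
  · -- base case n = k + 1
    have hE : (k+1-k)*(q^k-2*k)+k = q^k - k := by
      rw [show k+1-k = 1 by omega, one_mul]
      omega
    rw [hE, show q^(k+1) = q*q^k from pow_succ' q k]
    have hbase := base_all q k h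
    have htel := tel_base q k
    have hq1pos : 0 < (q-1)^2 := by
      have : 1 ≤ q - 1 := by omega
      positivity
    apply Nat.lt_of_mul_lt_mul_left (a := (q-1)^2)
    calc (q-1)^2 * ((∏ i ∈ range k, (q^(k+1-i)-1))^2 * q^(q^k-k) * Nat.factorial (q^k))
        = ((q-1) * ∏ i ∈ range k, (q^(k+1-i)-1))^2 * (q^(q^k-k) * Nat.factorial (q^k)) := by ring
      _ = ((q^(k+1)-1) * ∏ i ∈ range k, (q^(i+1)-1))^2 * (q^(q^k-k) * Nat.factorial (q^k)) := by
          rw [htel]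
      _ = (∏ i ∈ range k, (q^(i+1)-1))^2 * ((q^(k+1)-1)^2 * q^(q^k-k) * Nat.factorial (q^k)) := by
          ring
      _ < (∏ i ∈ range k, (q^(i+1)-1))^2 * ((q-1)^2 * Nat.descFactorial (q*q^k) (q^k)) := by
          have hPd : 0 < ∏ i ∈ range k, (q^(i+1)-1) := by
            apply Finset.prod_pos
            intro i _
            have : 2 ≤ q^(i+1) := by
              calc (2:ℕ) ≤ q := hq
                _ = q^1 := (pow_one q).symm
                _ ≤ q^(i+1) := Nat.pow_le_pow_right (by omega) (by omega)
            omega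
          exact Nat.mul_lt_mul_of_le_of_lt (le_refl _) hbase (by positivity)
      _ = (q-1)^2 * ((∏ i ∈ range k, (q^(i+1)-1))^2 * Nat.descFactorial (q*q^k) (q^k)) := by ring
  · -- induction step
    intro n hn IH
    have hb2 : 2 ≤ q^(n+1-k) := by
      calc (2:ℕ) ≤ q := hq
        _ = q^1 := (pow_one q).symm
        _ ≤ q^(n+1-k) := Nat.pow_le_pow_right (by omega) (by omega)
    have hstep := stepS q k n hq hk1 hc hn
    have htel := tel_step q k n hk1 (by omega)
    have hE : q^((n+1-k)*(q^k-2*k)+k) = q^((n-k)*(q^k-2*k)+k) * q^(q^k-2*k) := by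
      rw [← pow_add]
      congr 1
      rw [show n+1-k = (n-k)+1 by omega]
      ring
    rw [hE, show q^(n+1) = q*q^n from pow_succ' q n]
    apply Nat.lt_of_mul_lt_mul_left (a := (q^(n+1-k)-1)^2)
    have hapos : 0 < (q^(n+1)-1)^2 * q^(q^k-2*k) := by
      have h1 : 2 ≤ q^(n+1) := by
        calc (2:ℕ) ≤ q := hq
          _ = q^1 := (pow_one q).symm
          _ ≤ q^(n+1) := Nat.pow_le_pow_right (by omega) (by omega)
      have h2 : 1 ≤ q^(n+1) - 1 := by omega
      positivity
    calc (q^(n+1-k)-1)^2 * ((∏ i ∈ range k, (q^(n+1-i)-1))^2 * (q^((n-k)*(q^k-2*k)+k) * q^(q^k-2*k)) * Nat.factorial (q^k))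
        = ((q^(n+1-k)-1) * ∏ i ∈ range k, (q^(n+1-i)-1))^2 * (q^((n-k)*(q^k-2*k)+k) * q^(q^k-2*k) * Nat.factorial (q^k)) := by
          ring
      _ = ((q^(n+1)-1) * ∏ i ∈ range k, (q^(n-i)-1))^2 * (q^((n-k)*(q^k-2*k)+k) * q^(q^k-2*k) * Nat.factorial (q^k)) := by
          rw [htel]
      _ = ((q^(n+1)-1)^2 * q^(q^k-2*k)) * ((∏ i ∈ range k, (q^(n-i)-1))^2 * q^((n-k)*(q^k-2*k)+k) * Nat.factorial (q^k)) := by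
          ring
      _ < ((q^(n+1)-1)^2 * q^(q^k-2*k)) * ((∏ i ∈ range k, (q^(i+1)-1))^2 * Nat.descFactorial (q^n) (q^k)) := by
          exact Nat.mul_lt_mul_of_le_of_lt (le_refl _) IH hapos
      _ = (∏ i ∈ range k, (q^(i+1)-1))^2 * ((q^(n+1)-1)^2 * q^(q^k-2*k) * Nat.descFactorial (q^n) (q^k)) := by
          ring
      _ ≤ (∏ i ∈ range k, (q^(i+1)-1))^2 * ((q^(n+1-k)-1)^2 * Nat.descFactorial (q*q^n) (q^k)) := by
          exact Nat.mul_le_mul_left _ hstep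
      _ = (q^(n+1-k)-1)^2 * ((∏ i ∈ range k, (q^(i+1)-1))^2 * Nat.descFactorial (q*q^n) (q^k)) := by
          ring

end GaussAux

open Finset in
/-- If `q ≥ 4, n > k ≥ 1`, or `q = 3, n > k ≥ 2`, or `q = 2, n > k ≥ 3`, then
`[n choose k]_q² / C(q^n, q^k) < 1 / q^{(n−k)(q^k − 2k) + k}`. -/
theorem gaussBinomial_sq_div_choose_lt_general (q n k : ℕ) (hkn : k < n)
    (h : (4 ≤ q ∧ 1 ≤ k) ∨ (q = 3 ∧ 2 ≤ k) ∨ (q = 2 ∧ 3 ≤ k)) :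
    (gaussBinomial q n k) ^ 2 / (Nat.choose (q ^ n) (q ^ k) : ℚ)
      < 1 / (q : ℚ) ^ ((n - k) * (q ^ k - 2 * k) + k) := by
  have hq : 2 ≤ q := by rcases h with ⟨h1,_⟩|⟨h1,_⟩|⟨h1,_⟩ <;> omega
  have hmain := GaussAux.main_nat q k h n (by omega)
  rw [Nat.descFactorial_eq_factorial_mul_choose] at hmain
  -- cancel the factorial
  have hK : (∏ i ∈ range k, (q^(n-i)-1))^2 * q^((n-k)*(q^k-2*k)+k)
      < (∏ i ∈ range k, (q^(i+1)-1))^2 * Nat.choose (q^n) (q^k) := by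
    have hfac : 0 < Nat.factorial (q^k) := Nat.factorial_pos _
    apply Nat.lt_of_mul_lt_mul_right (a := Nat.factorial (q^k))
    calc (∏ i ∈ range k, (q^(n-i)-1))^2 * q^((n-k)*(q^k-2*k)+k) * Nat.factorial (q^k)
        < (∏ i ∈ range k, (q^(i+1)-1))^2 * (Nat.factorial (q^k) * Nat.choose (q^n) (q^k)) :=
          hmain
      _ = (∏ i ∈ range k, (q^(i+1)-1))^2 * Nat.choose (q^n) (q^k) * Nat.factorial (q^k) := by
          ring
  -- positivity facts
  have hPd : 0 < ∏ i ∈ range k, (q^(i+1)-1) := by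
    apply Finset.prod_pos
    intro i _
    have : 2 ≤ q^(i+1) := by
      calc (2:ℕ) ≤ q := hq
        _ = q^1 := (pow_one q).symm
        _ ≤ q^(i+1) := Nat.pow_le_pow_right (by omega) (by omega)
    omega
  have hC : 0 < Nat.choose (q^n) (q^k) :=
    Nat.choose_pos (Nat.pow_le_pow_right (by omega) (by omega))
  -- rewrite gaussBinomial as a ratio of nat casts
  have hg : gaussBinomial q n k
      = ((∏ i ∈ range k, (q^(n-i)-1) : ℕ) : ℚ) / ((∏ i ∈ range k, (q^(i+1)-1) : ℕ) : ℚ) := by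
    rw [gaussBinomial]
    congr 1
    · rw [Nat.cast_prod]
      refine Finset.prod_congr rfl fun i hi => ?_
      have h1 : (1:ℕ) ≤ q^(n-i) := Nat.one_le_pow _ _ (by omega)
      rw [Nat.cast_sub h1, Nat.cast_pow, Nat.cast_one]
    · rw [Nat.cast_prod]
      refine Finset.prod_congr rfl fun i hi => ?_
      have h1 : (1:ℕ) ≤ q^(i+1) := Nat.one_le_pow _ _ (by omega)
      rw [Nat.cast_sub h1, Nat.cast_pow, Nat.cast_one]
  rw [hg, div_pow, div_div]
  have hPdQ : (0:ℚ) < ((∏ i ∈ range k, (q^(i+1)-1) : ℕ) : ℚ) := by exact_mod_cast hPd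
  have hCQ : (0:ℚ) < (Nat.choose (q^n) (q^k) : ℚ) := by exact_mod_cast hC
  have hqQ : (0:ℚ) < (q:ℚ) ^ ((n-k)*(q^k-2*k)+k) := by positivity
  rw [div_lt_div_iff₀ (by positivity) hqQ, one_mul]
  calc ((∏ i ∈ range k, (q^(n-i)-1) : ℕ) : ℚ)^2 * (q:ℚ)^((n-k)*(q^k-2*k)+k)
      = (((∏ i ∈ range k, (q^(n-i)-1))^2 * q^((n-k)*(q^k-2*k)+k) : ℕ) : ℚ) := by
        push_cast; ring
    _ < (((∏ i ∈ range k, (q^(i+1)-1))^2 * Nat.choose (q^n) (q^k) : ℕ) : ℚ) := by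
        exact_mod_cast hK
    _ = ((∏ i ∈ range k, (q^(i+1)-1) : ℕ) : ℚ)^2 * (Nat.choose (q^n) (q^k) : ℚ) := by
        push_cast; ring
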